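/- If G is a graph with no isolated vertex and H is a complete graph on at least 2 vertices (equivalently γ^s_{(1,0)}(H)=1), then the secure domination number of G∘H equals the weak Roman domination number of G: γ^s_{(1,0)}(G∘H) = γ^s_{(1,0,0)}(G). -/

import Mathlib

namespace SecureW

open Finset

/-- Lexicographic product of simple graphs. -/
def lexProd {α β : Type*} (G : SimpleGraph α) (H : SimpleGraph β) :
    SimpleGraph (α × β) where
  Adj p q := G.Adj p.1 q.1 ∨ (p.1 = q.1 ∧ H.Adj p.2 q.2)
  symm := by
    constructor
    rintro p q (h | ⟨h1, h2⟩)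
    · exact Or.inl h.symm
    · exact Or.inr ⟨h1.symm, h2.symm⟩
  loopless := by
    constructor
    rintro p (h | ⟨_, h⟩)
    · exact G.irrefl h
    · exact H.irrefl h

open scoped Classical in
/-- Sum of `f` over the open neighbourhood of `v`. -/
noncomputable def nbrSum {V : Type*} [Fintype V] (G : SimpleGraph V) (f : V → ℕ) (v : V) : ℕ :=
  ∑ u ∈ Finset.univ.filter (fun u => G.Adj v u), f u

/-- `f` is a `w`-dominating function, where `w` is given as a list `(w_0, …, w_l)`. -/
def IsWDom {V : Type*} [Fintype V] (G : SimpleGraph V) (ws : List ℕ) (f : V → ℕ) : Prop :=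
  (∀ v, f v < ws.length) ∧ ∀ v, ws.getD (f v) 0 ≤ nbrSum G f v

/-- The function obtained from `f` by moving one unit of weight from `u` to `v`. -/
def move {V : Type*} [DecidableEq V] (f : V → ℕ) (u v : V) : V → ℕ :=
  fun x => if x = v then 1 else if x = u then f u - 1 else f x

open scoped Classical in
/-- `f` is a secure `w`-dominating function. -/
def IsSecureWDom {V : Type*} [Fintype V] (G : SimpleGraph V) (ws : List ℕ) (f : V → ℕ) : Prop :=
  IsWDom G ws f ∧ ∀ v, f v = 0 → ∃ u, G.Adj v u ∧ 0 < f u ∧ IsWDom G ws (move f u v)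

/-- The weight of a function. -/
noncomputable def weight {V : Type*} [Fintype V] (f : V → ℕ) : ℕ := ∑ v, f v

/-- The `w`-domination number. -/
noncomputable def wDomNum {V : Type*} [Fintype V] (G : SimpleGraph V) (ws : List ℕ) : ℕ :=
  sInf {k | ∃ f, IsWDom G ws f ∧ weight f = k}

/-- The secure `w`-domination number. -/
noncomputable def secWDomNum {V : Type*} [Fintype V] (G : SimpleGraph V) (ws : List ℕ) : ℕ :=
  sInf {k | ∃ f, IsSecureWDom G ws f ∧ weight f = k}

/-- The (ordinary) domination number, as `γ_{(1,0)}`. -/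
noncomputable def domNum {V : Type*} [Fintype V] (G : SimpleGraph V) : ℕ :=
  wDomNum G [1, 0]

/-- `G` has no isolated vertex. -/
def NoIsolated {V : Type*} (G : SimpleGraph V) : Prop := ∀ v, ∃ u, G.Adj v u



variable {V : Type*} [Fintype V]

lemma nbrSum_pos_iff (G : SimpleGraph V) (f : V → ℕ) (v : V) :
    1 ≤ nbrSum G f v ↔ ∃ u, G.Adj v u ∧ 0 < f u := by
  classical
  rw [nbrSum, Nat.one_le_iff_ne_zero, Ne, Finset.sum_eq_zero_iff]
  push_neg
  simp [Nat.pos_iff_ne_zero]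

lemma isWDom2_iff (G : SimpleGraph V) (f : V → ℕ) :
    IsWDom G [1, 0] f ↔ (∀ v, f v ≤ 1) ∧ ∀ v, f v = 0 → ∃ u, G.Adj v u ∧ 0 < f u := by
  constructor
  · rintro ⟨h1, h2⟩
    refine ⟨fun v => by have := h1 v; simp at this; omega, fun v hv => ?_⟩
    have := h2 v
    rw [hv] at this
    exact (nbrSum_pos_iff G f v).mp this
  · rintro ⟨h1, h2⟩
    refine ⟨fun v => by have := h1 v; simp; omega, fun v => ?_⟩
    rcases hfv : f v with _ | n
    · simpa using (nbrSum_pos_iff G f v).mpr (h2 v hfv)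
    · have hle := h1 v
      rw [hfv] at hle
      have hn : n = 0 := by omega
      subst hn
      simp

lemma isWDom3_iff (G : SimpleGraph V) (f : V → ℕ) :
    IsWDom G [1, 0, 0] f ↔ (∀ v, f v ≤ 2) ∧ ∀ v, f v = 0 → ∃ u, G.Adj v u ∧ 0 < f u := by
  constructor
  · rintro ⟨h1, h2⟩
    refine ⟨fun v => by have := h1 v; simp at this; omega, fun v hv => ?_⟩
    have := h2 v
    rw [hv] at this
    exact (nbrSum_pos_iff G f v).mp this
  · rintro ⟨h1, h2⟩
    refine ⟨fun v => by have := h1 v; simp; omega, fun v => ?_⟩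
    rcases hfv : f v with _ | n
    · simpa using (nbrSum_pos_iff G f v).mpr (h2 v hfv)
    · have hle := h1 v
      rw [hfv] at hle
      have hn : n = 0 ∨ n = 1 := by omega
      rcases hn with rfl | rfl <;> simp

lemma lex_adj {α β : Type*} (G : SimpleGraph α) (H : SimpleGraph β) (p q : α × β) :
    (lexProd G H).Adj p q ↔ G.Adj p.1 q.1 ∨ (p.1 = q.1 ∧ H.Adj p.2 q.2) := Iff.rfl

lemma const_one_secure (G : SimpleGraph V) (ws : List ℕ) (h2 : 2 ≤ ws.length)
    (h1 : ws.getD 1 0 = 0) :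
    IsSecureWDom G ws (fun _ => 1) := by
  refine ⟨⟨fun v => ?_, fun v => ?_⟩, fun v hv => by simp at hv⟩
  · show 1 < ws.length; omega
  · show ws.getD 1 0 ≤ _
    rw [h1]
    exact Nat.zero_le _





lemma dirA {α β : Type*} [Fintype α] [Fintype β] [Nonempty β]
    (G : SimpleGraph α) (f : α × β → ℕ)
    (hf : IsSecureWDom (lexProd G (⊤ : SimpleGraph β)) [1, 0] f) :
    ∃ g : α → ℕ, IsSecureWDom G [1, 0, 0] g ∧ weight g ≤ weight f := by
  classical
  obtain ⟨hdom, hsec⟩ := hf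
  rw [isWDom2_iff] at hdom
  obtain ⟨hble, hd⟩ := hdom
  set F : α → ℕ := fun v => ∑ b, f (v, b) with hFdef
  set g : α → ℕ := fun v => min (F v) 2 with hgdef
  have hgF : ∀ v, g v = min (F v) 2 := fun v => rfl
  have hFf : ∀ v b, f (v, b) ≤ F v := by
    intro v b
    show f (v, b) ≤ ∑ b, f (v, b)
    exact Finset.single_le_sum (f := fun b => f (v, b)) (fun _ _ => Nat.zero_le _)
      (Finset.mem_univ b)
  have hzero : ∀ v, g v = 0 → ∀ b, f (v, b) = 0 := by
    intro v hv b
    have h0 : F v = 0 := by rw [hgF] at hv; omega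
    have := hFf v b; omega
  have hgpos : ∀ v b, 0 < f (v, b) → 0 < g v := by
    intro v b h
    have := hFf v b; rw [hgF]; omega
  have htwo : ∀ u c e, c ≠ e → 0 < f (u, c) → 0 < f (u, e) → g u = 2 := by
    intro u c e hne hc he
    have hsum : f (u, c) + ∑ b ∈ Finset.univ.erase c, f (u, b) = F u := by
      show _ = ∑ b, f (u, b)
      exact Finset.add_sum_erase _ (fun b => f (u, b)) (Finset.mem_univ c)
    have h2 : f (u, e) ≤ ∑ b ∈ Finset.univ.erase c, f (u, b) :=
      Finset.single_le_sum (f := fun b => f (u, b)) (fun _ _ => Nat.zero_le _)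
        (Finset.mem_erase.mpr ⟨hne.symm, Finset.mem_univ e⟩)
    rw [hgF]; omega
  have hw : weight g ≤ weight f := by
    rw [weight, weight, Fintype.sum_prod_type]
    exact Finset.sum_le_sum fun v _ => min_le_left _ _
  refine ⟨g, ⟨(isWDom3_iff G g).mpr ⟨fun v => min_le_right _ _, ?_⟩, ?_⟩, hw⟩
  · -- domination
    intro v hv
    obtain ⟨b⟩ := ‹Nonempty β›
    obtain ⟨⟨u, c⟩, hadj, hpos⟩ := hd (v, b) (hzero v hv b)
    rcases hadj with h | ⟨h1, _⟩
    · exact ⟨u, h, hgpos u c hpos⟩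
    · obtain rfl : v = u := h1
      exact absurd (hzero v hv c) (by omega)
  · -- security
    intro v hv
    obtain ⟨b⟩ := ‹Nonempty β›
    obtain ⟨⟨u, c⟩, hadj, hpos, hmv⟩ := hsec (v, b) (hzero v hv b)
    have hvu : v ≠ u := by
      rintro rfl
      rcases hadj with h | ⟨_, _⟩
      · exact G.irrefl h
      · exact absurd (hzero v hv c) (by omega)
    have hadjG : G.Adj v u := by
      rcases hadj with h | ⟨h1, _⟩
      · exact h
      · exact absurd h1 hvu
    rw [isWDom2_iff] at hmv
    obtain ⟨hmb, hm2⟩ := hmv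
    refine ⟨u, hadjG, hgpos u c hpos, (isWDom3_iff _ _).mpr ⟨?_, ?_⟩⟩
    · intro x
      simp only [move]
      split_ifs with h1 h2
      · omega
      · have := hgF u; omega
      · exact min_le_right _ _
    · intro x hx
      by_cases hxv : x = v
      · subst hxv; simp [move] at hx
      by_cases hxu : x = u
      · subst hxu
        have hgu : g x = 1 := by
          simp [move, hxv] at hx
          have := hgpos x c hpos
          omega
        have hrest : ∀ e, e ≠ c → f (x, e) = 0 := by
          intro e he
          by_contra hne
          have := htwo x c e (Ne.symm he) hpos (Nat.pos_of_ne_zero hne)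
          omega
        have hfc : f (x, c) = 1 := by
          have h1 := hFf x c
          have h2 := hgF x
          omega
        have hnexc : (x, c) ≠ (v, b) := by simp [hxv]
        obtain ⟨⟨y, e⟩, hadj2, hpos2⟩ := hm2 (x, c) (by simp [move, hnexc, hfc])
        by_cases hyvb : (y, e) = (v, b)
        · rw [hyvb] at hadj2
          rcases hadj2 with h | ⟨h1, _⟩
          · exact ⟨v, h, by simp [move]⟩
          · exact absurd h1 hxv
        · by_cases hyuc : (y, e) = (x, c)
          · rw [hyuc] at hpos2
            simp [move, hnexc, hfc] at hpos2
          · have hpos2' : 0 < f (y, e) := by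
              simpa [move, hyvb, hyuc] using hpos2
            rcases hadj2 with h | ⟨h1, h2⟩
            · have hyv : y ≠ v := by
                rintro rfl
                exact absurd (hzero y hv e) (by omega)
              have hyx : y ≠ x := (G.ne_of_adj h).symm
              refine ⟨y, h, ?_⟩
              have hmy : move g x v y = g y := by simp [move, hyv, hyx]
              rw [hmy]
              exact hgpos y e hpos2'
            · obtain rfl : x = y := h1
              have hec : e ≠ c := fun hh => hyuc (by rw [hh])
              exact absurd (hrest e hec) (by omega)
      · -- x ≠ u, v
        have hgx : g x = 0 := by
          have hmx : move g u v x = g x := by simp [move, hxv, hxu]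
          rw [hmx] at hx
          exact hx
        have hnexb : (x, b) ≠ (v, b) := by simp [hxv]
        have hnexb2 : (x, b) ≠ (u, c) := by simp [hxu]
        obtain ⟨⟨y, e⟩, hadj2, hpos2⟩ :=
          hm2 (x, b) (by simp [move, hnexb, hnexb2, hzero x hgx b])
        by_cases hyvb : (y, e) = (v, b)
        · rw [hyvb] at hadj2
          rcases hadj2 with h | ⟨h1, _⟩
          · exact ⟨v, h, by simp [move]⟩
          · exact absurd h1 hxv
        by_cases hyuc : (y, e) = (u, c)
        · rw [hyuc] at hpos2
          have hneuc : (u, c) ≠ (v, b) := by simp [Ne.symm hvu]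
          have hfu := hble (u, c)
          simp [move, hneuc] at hpos2
          omega
        · have hpos2' : 0 < f (y, e) := by
            simpa [move, hyvb, hyuc] using hpos2
          rcases hadj2 with h | ⟨h1, h2⟩
          · by_cases hyv : y = v
            · subst hyv
              exact absurd (hzero y hv e) (by omega)
            by_cases hyu : y = u
            · subst hyu
              have hec : e ≠ c := fun hh => hyuc (by rw [hh])
              have hgu2 : g y = 2 := htwo y c e (Ne.symm hec) hpos hpos2'
              refine ⟨y, h, ?_⟩
              have hmy : move g y v y = g y - 1 := by
                simp [move, Ne.symm hvu]
              rw [hmy]; omega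
            · refine ⟨y, h, ?_⟩
              have hmy : move g u v y = g y := by simp [move, hyv, hyu]
              rw [hmy]
              exact hgpos y e hpos2'
          · obtain rfl : x = y := h1
            exact absurd (hzero x hgx e) (by omega)





lemma dirB {α β : Type*} [Fintype α] [Fintype β]
    (G : SimpleGraph α) {b0 b1 : β} (hbb : b0 ≠ b1) (g : α → ℕ)
    (hg : IsSecureWDom G [1, 0, 0] g) :
    ∃ f : α × β → ℕ,
      IsSecureWDom (lexProd G (⊤ : SimpleGraph β)) [1, 0] f ∧ weight f ≤ weight g := by
  classical
  obtain ⟨hdom, hsec⟩ := hg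
  rw [isWDom3_iff] at hdom
  obtain ⟨hble, hd⟩ := hdom
  set f : α × β → ℕ :=
    fun p => if p.2 = b0 ∧ 1 ≤ g p.1 then 1 else if p.2 = b1 ∧ g p.1 = 2 then 1 else 0
    with hfdef
  have hf0 : ∀ v, f (v, b0) = if 1 ≤ g v then 1 else 0 := by
    intro v; simp [hfdef, hbb]
  have hf1 : ∀ v, f (v, b1) = if g v = 2 then 1 else 0 := by
    intro v; simp [hfdef, hbb.symm]
  have hfo : ∀ v b, b ≠ b0 → b ≠ b1 → f (v, b) = 0 := by
    intro v b h0 h1; simp [hfdef, h0, h1]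
  have hfle : ∀ p, f p ≤ 1 := by
    intro p; simp only [hfdef]; split_ifs <;> omega
  have hw : weight f ≤ weight g := by
    rw [weight, weight, Fintype.sum_prod_type]
    refine Finset.sum_le_sum fun v _ => ?_
    have hsum : ∑ b, f (v, b) = f (v, b0) + f (v, b1) := by
      rw [← Finset.sum_subset (Finset.subset_univ {b0, b1}), Finset.sum_pair hbb]
      intro x _ hx
      simp only [Finset.mem_insert, Finset.mem_singleton] at hx
      push_neg at hx
      exact hfo v x hx.1 hx.2
    rw [hsum, hf0, hf1]
    have := hble v
    split_ifs <;> omega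
  refine ⟨f, ⟨(isWDom2_iff _ _).mpr ⟨hfle, ?_⟩, ?_⟩, hw⟩
  · -- domination
    rintro ⟨v, b⟩ hp
    by_cases hgv : 1 ≤ g v
    · have hbne : b ≠ b0 := by
        rintro rfl
        rw [hf0, if_pos hgv] at hp
        omega
      exact ⟨(v, b0), Or.inr ⟨rfl, by simpa using hbne⟩, by rw [hf0]; split_ifs <;> omega⟩
    · obtain ⟨u, hadj, hu⟩ := hd v (by omega)
      exact ⟨(u, b0), Or.inl hadj, by rw [hf0]; split_ifs <;> omega⟩
  · -- security
    rintro ⟨v, b⟩ hp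
    by_cases hgv : 1 ≤ g v
    · -- move from (v, b0) to (v, b)
      have hbne : b ≠ b0 := by
        rintro rfl
        rw [hf0, if_pos hgv] at hp
        omega
      refine ⟨(v, b0), Or.inr ⟨rfl, by simpa using hbne⟩,
        by rw [hf0]; split_ifs <;> omega, (isWDom2_iff _ _).mpr ⟨?_, ?_⟩⟩
      · intro p
        simp only [move]
        split_ifs with h1 h2
        · omega
        · have := hfle (v, b0); omega
        · exact hfle p
      · rintro ⟨x, d⟩ hq
        by_cases hxv : x = v
        · subst hxv
          have hdb : d ≠ b := by
            rintro rfl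
            simp [move] at hq
          refine ⟨(x, b), Or.inr ⟨rfl, by simpa using hdb⟩, by simp [move]⟩
        · have hfxd : f (x, d) = 0 := by
            have h1 : (x, d) ≠ (v, b) := by simp [hxv]
            have h2 : (x, d) ≠ (v, b0) := by simp [hxv]
            simpa [move, h1, h2] using hq
          by_cases hgx : 1 ≤ g x
          · have hdb0 : d ≠ b0 := by
              rintro rfl
              rw [hf0, if_pos hgx] at hfxd
              omega
            refine ⟨(x, b0), Or.inr ⟨rfl, by simpa using hdb0⟩, ?_⟩
            have hne1 : (x, b0) ≠ (v, b) := by simp [hxv]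
            have hne2 : (x, b0) ≠ (v, b0) := by simp [hxv]
            simp only [move, if_neg hne1, if_neg hne2]
            rw [hf0]; split_ifs <;> omega
          · obtain ⟨y, hadj, hy⟩ := hd x (by omega)
            by_cases hyv : y = v
            · subst hyv
              exact ⟨(y, b), Or.inl hadj, by simp [move]⟩
            · refine ⟨(y, b0), Or.inl hadj, ?_⟩
              have hne1 : (y, b0) ≠ (v, b) := by simp [hyv]
              have hne2 : (y, b0) ≠ (v, b0) := by simp [hyv]
              simp only [move, if_neg hne1, if_neg hne2]
              rw [hf0]; split_ifs <;> omega
    · -- g v = 0 : use security of g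
      have hgv0 : g v = 0 := by omega
      obtain ⟨u, hadj, hu, hmv⟩ := hsec v hgv0
      rw [isWDom3_iff] at hmv
      obtain ⟨hmb, hmd⟩ := hmv
      have hvu : v ≠ u := G.ne_of_adj hadj
      refine ⟨(u, b0), Or.inl hadj, by rw [hf0]; split_ifs <;> omega,
        (isWDom2_iff _ _).mpr ⟨?_, ?_⟩⟩
      · intro p
        simp only [move]
        split_ifs with h1 h2
        · omega
        · have := hfle (u, b0); omega
        · exact hfle p
      · rintro ⟨x, d⟩ hq
        by_cases hxv : x = v
        · subst hxv
          have hdb : d ≠ b := by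
            rintro rfl
            simp [move] at hq
          exact ⟨(x, b), Or.inr ⟨rfl, by simpa using hdb⟩, by simp [move]⟩
        by_cases hxu : x = u
        · subst hxu
          by_cases hgu2 : g x = 2
          · have hdb1 : d ≠ b1 := by
              rintro rfl
              simp [move, show (x, d) ≠ (v, b) from by simp [hxv],
                show (x, d) ≠ (x, b0) from by simp [Ne.symm hbb], hf1, hgu2] at hq
            have hne1 : (x, b1) ≠ (v, b) := by simp [hxv]
            have hne2 : (x, b1) ≠ (x, b0) := by simp [Ne.symm hbb]
            refine ⟨(x, b1), Or.inr ⟨rfl, by simpa using hdb1⟩, ?_⟩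
            simp only [move, if_neg hne1, if_neg hne2]
            rw [hf1]
            split_ifs <;> omega
          · -- g u = 1
            have hmu0 : move g x v x = 0 := by
              have h1 := hble x
              simp [move, hxv]
              omega
            obtain ⟨y, hady, hy⟩ := hmd x hmu0
            by_cases hyv : y = v
            · subst hyv
              exact ⟨(y, b), Or.inl hady, by simp [move]⟩
            · have hyx : y ≠ x := fun h => (G.ne_of_adj hady) h.symm
              have hgy : 1 ≤ g y := by
                have : move g x v y = g y := by simp [move, hyv, hyx]
                omega
              refine ⟨(y, b0), Or.inl hady, ?_⟩
              have hne1 : (y, b0) ≠ (v, b) := by simp [hyv]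
              have hne2 : (y, b0) ≠ (x, b0) := by simp [hyx]
              simp only [move, if_neg hne1, if_neg hne2]
              rw [hf0]; split_ifs <;> omega
        · -- x ∉ {u, v}
          have hfxd : f (x, d) = 0 := by
            have h1 : (x, d) ≠ (v, b) := by simp [hxv]
            have h2 : (x, d) ≠ (u, b0) := by simp [hxu]
            simpa [move, h1, h2] using hq
          by_cases hgx : 1 ≤ g x
          · have hdb0 : d ≠ b0 := by
              rintro rfl
              rw [hf0, if_pos hgx] at hfxd
              omega
            refine ⟨(x, b0), Or.inr ⟨rfl, by simpa using hdb0⟩, ?_⟩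
            have hne1 : (x, b0) ≠ (v, b) := by simp [hxv]
            have hne2 : (x, b0) ≠ (u, b0) := by simp [hxu]
            simp only [move, if_neg hne1, if_neg hne2]
            rw [hf0]; split_ifs <;> omega
          · have hgx0 : move g u v x = 0 := by
              simp only [move, if_neg hxv, if_neg hxu]
              omega
            obtain ⟨y, hady, hy⟩ := hmd x hgx0
            by_cases hyv : y = v
            · subst hyv
              exact ⟨(y, b), Or.inl hady, by simp [move]⟩
            by_cases hyu : y = u
            · subst hyu
              have hgu2 : g y = 2 := by
                have hne : ¬ (y = v) := fun h => hyv h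
                have : move g y v y = g y - 1 := by simp [move, hne]
                have := hble y
                omega
              refine ⟨(y, b1), Or.inl hady, ?_⟩
              have hne1 : (y, b1) ≠ (v, b) := by simp [hyv]
              have hne2 : (y, b1) ≠ (y, b0) := by simp [hbb.symm]
              simp only [move, if_neg hne1, if_neg hne2]
              rw [hf1]; split_ifs <;> omega
            · have hgy : 1 ≤ g y := by
                have : move g u v y = g y := by simp [move, hyv, hyu]
                omega
              refine ⟨(y, b0), Or.inl hady, ?_⟩
              have hne1 : (y, b0) ≠ (v, b) := by simp [hyv]
              have hne2 : (y, b0) ≠ (u, b0) := by simp [hyu]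
              simp only [move, if_neg hne1, if_neg hne2]
              rw [hf0]; split_ifs <;> omega



end SecureW

open SecureW in
theorem stmt_1 {α β : Type*} [Fintype α] [Fintype β]
    (G : SimpleGraph α) (hG : NoIsolated G) (hH : Nontrivial β) :
    secWDomNum (lexProd G (⊤ : SimpleGraph β)) [1, 0] = secWDomNum G [1, 0, 0] := by
  classical
  obtain ⟨b0, b1, hbb⟩ := hH
  haveI : Nonempty β := ⟨b0⟩
  have hne1 : {k | ∃ f, IsSecureWDom (lexProd G (⊤ : SimpleGraph β)) [1, 0] f ∧ weight f = k}.Nonempty :=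
    ⟨weight (fun _ => 1), fun _ => 1, const_one_secure _ _ (by norm_num) (by norm_num), rfl⟩
  have hne2 : {k | ∃ f, IsSecureWDom G [1, 0, 0] f ∧ weight f = k}.Nonempty :=
    ⟨weight (fun _ => 1), fun _ => 1, const_one_secure _ _ (by norm_num) (by norm_num), rfl⟩
  apply le_antisymm
  · obtain ⟨g, hg, hgw⟩ := Nat.sInf_mem hne2
    obtain ⟨f, hf, hfw⟩ := dirB G hbb g hg
    calc secWDomNum (lexProd G (⊤ : SimpleGraph β)) [1, 0] ≤ weight f :=
          Nat.sInf_le ⟨f, hf, rfl⟩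
      _ ≤ weight g := hfw
      _ = secWDomNum G [1, 0, 0] := hgw
  · obtain ⟨f, hf, hfw⟩ := Nat.sInf_mem hne1
    obtain ⟨g, hg, hgw⟩ := dirA G f hf
    calc secWDomNum G [1, 0, 0] ≤ weight g := Nat.sInf_le ⟨g, hg, rfl⟩
      _ ≤ weight f := hgw
      _ = secWDomNum (lexProd G (⊤ : SimpleGraph β)) [1, 0] := hfw
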